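/- arXiv:2105.08232 — 2 statements merged into one kernel-verified Lean document; each statement's English description precedes it below -/
import Mathlib

section
/- (Inequality (25) in the proof of Lemma 3.) Let X̂, Z ∈ ℝ^{n×r}, let P ∈ ℝ^{n×n} be the orthogonal projection onto the column space of X̂ and P⊥ = I_n − P, let R ∈ ℝ^{r×r} satisfy PZ = X̂R, and define Ŷ = ½X̂ − ½X̂RRᵀ − P⊥ZRᵀ. Then ‖X̂Ŷᵀ + ŶX̂ᵀ‖_F² ≥ 2·tr(X̂ᵀX̂ŶᵀŶ) ≥ 2·σ_r(X̂)²·‖Ŷ‖_F², where σ_r(X̂) is the smallest singular value of X̂. -/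
open scoped BigOperators
open Matrix

noncomputable section

/-- Euclidean norm of a real vector indexed by `Fin k`. -/
def enorm' {k : ℕ} (v : Fin k → ℝ) : ℝ := Real.sqrt (∑ i, (v i) ^ 2)

/-- Frobenius norm of a real matrix. -/
def fnorm {a b : ℕ} (M : Matrix (Fin a) (Fin b) ℝ) : ℝ :=
  Real.sqrt (∑ i, ∑ j, (M i j) ^ 2)

/-- Frobenius inner product of two real matrices. -/
def finner {a b : ℕ} (M N : Matrix (Fin a) (Fin b) ℝ) : ℝ := ∑ i, ∑ j, M i j * N i j

open Classical in
/-- The `i`-th largest eigenvalue (`0`-indexed, i.e. `eigval M 0` is the largest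
eigenvalue and `eigval M ⟨k-1,_⟩` the smallest) of a real symmetric matrix
(junk value `0` if the matrix is not symmetric). -/
def eigval {k : ℕ} (M : Matrix (Fin k) (Fin k) ℝ) (i : Fin k) : ℝ :=
  if h : M.IsHermitian then
    h.eigenvalues (Tuple.sort h.eigenvalues ⟨k - 1 - i.val, by have := i.isLt; omega⟩)
  else 0

/-- Spectral norm of a real matrix: `√(λ₁(XᵀX))`. -/
def specNorm {a b : ℕ} (X : Matrix (Fin a) (Fin b) ℝ) : ℝ :=
  if hb : 0 < b then Real.sqrt (eigval (Xᵀ * X) ⟨0, hb⟩) else 0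

/-- Smallest singular value `σ_b(X)` of `X ∈ ℝ^{a×b}`: the square root of the
smallest eigenvalue of `XᵀX`. -/
def sigmaMin {a b : ℕ} (X : Matrix (Fin a) (Fin b) ℝ) : ℝ :=
  if hb : 0 < b then Real.sqrt (eigval (Xᵀ * X) ⟨b - 1, by omega⟩) else 0

/-- Vectorization of a square matrix. -/
def vecSq {n : ℕ} (M : Matrix (Fin n) (Fin n) ℝ) : Fin (n * n) → ℝ :=
  fun k => M (finProdFinEquiv.symm k).1 (finProdFinEquiv.symm k).2

/-- Vectorization of an `n × r` matrix. -/
def vecR {n r : ℕ} (U : Matrix (Fin n) (Fin r) ℝ) : Fin (n * r) → ℝ :=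
  fun k => U (finProdFinEquiv.symm k).1 (finProdFinEquiv.symm k).2

/-- `mat_S(v) = (V + Vᵀ)/2` where `vec V = v`. -/
def matS {n : ℕ} (v : Fin (n * n) → ℝ) : Matrix (Fin n) (Fin n) ℝ :=
  (1 / 2 : ℝ) • ((Matrix.of fun i j => v (finProdFinEquiv (i, j))) +
    (Matrix.of fun i j => v (finProdFinEquiv (i, j)))ᵀ)

/-- The sensing operator `𝒜(M) = (⟨A₁,M⟩, …, ⟨A_m,M⟩)`. -/
def calA {n m : ℕ} (A : Fin m → Matrix (Fin n) (Fin n) ℝ)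
    (M : Matrix (Fin n) (Fin n) ℝ) : Fin m → ℝ := fun i => finner (A i) M

/-- Matrix representation `𝐀 ∈ ℝ^{m×n²}` of `𝒜`, satisfying `𝐀 ⬝ vec M = 𝒜(M)`. -/
def bigA {n m : ℕ} (A : Fin m → Matrix (Fin n) (Fin n) ℝ) :
    Matrix (Fin m) (Fin (n * n)) ℝ := Matrix.of fun i k => vecSq (A i) k

/-- `𝒜` satisfies the `(δ, g)`-RIP property. -/
def RIP {n m : ℕ} (A : Fin m → Matrix (Fin n) (Fin n) ℝ) (δ : ℝ) (g : ℕ) : Prop :=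
  ∀ M : Matrix (Fin n) (Fin n) ℝ, M.rank ≤ g →
    (1 - δ) * fnorm M ^ 2 ≤ enorm' (calA A M) ^ 2 ∧
      enorm' (calA A M) ^ 2 ≤ (1 + δ) * fnorm M ^ 2

/-- The matrix `𝐗̂ ∈ ℝ^{n² × nr}` satisfying `𝐗̂ ⬝ vec U = vec (X̂Uᵀ + UX̂ᵀ)`. -/
def bigX {n r : ℕ} (X : Matrix (Fin n) (Fin r) ℝ) :
    Matrix (Fin (n * n)) (Fin (n * r)) ℝ :=
  Matrix.of fun k l =>
    (if (finProdFinEquiv.symm k).2 = (finProdFinEquiv.symm l).1 then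
      X (finProdFinEquiv.symm k).1 (finProdFinEquiv.symm l).2 else 0) +
    (if (finProdFinEquiv.symm k).1 = (finProdFinEquiv.symm l).1 then
      X (finProdFinEquiv.symm k).2 (finProdFinEquiv.symm l).2 else 0)

/-- The Kronecker product `I_r ⊗ G`, realized as an operator on vectorized
`n × r` matrices (it sends `vec U` to `vec (G * U)`). -/
def kronIdR {n : ℕ} (r : ℕ) (G : Matrix (Fin n) (Fin n) ℝ) :
    Matrix (Fin (n * r)) (Fin (n * r)) ℝ :=
  Matrix.of fun k l =>
    if (finProdFinEquiv.symm k).2 = (finProdFinEquiv.symm l).2 then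
      G (finProdFinEquiv.symm k).1 (finProdFinEquiv.symm l).1 else 0

/-- Loewner order: `A ⪯ B` iff `B - A` is positive semidefinite. -/
def PSDle {k : ℕ} (A B : Matrix (Fin k) (Fin k) ℝ) : Prop := (B - A).PosSemidef

/-- The objective `f(X) = ½‖𝒜(XXᵀ) − b + w‖²` with `b = 𝒜(M*)`. -/
def fobj {n m r : ℕ} (A : Fin m → Matrix (Fin n) (Fin n) ℝ)
    (Mstar : Matrix (Fin n) (Fin n) ℝ) (w : Fin m → ℝ)
    (X : Matrix (Fin n) (Fin r) ℝ) : ℝ :=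
  (1 / 2) * enorm' (fun i => calA A (X * Xᵀ) i - calA A Mstar i + w i) ^ 2

/-- View a point of Euclidean space as an `n × r` matrix. -/
def toMat {n r : ℕ} (x : EuclideanSpace ℝ (Fin n × Fin r)) : Matrix (Fin n) (Fin r) ℝ :=
  Matrix.of fun i j => x (i, j)

/-- View an `n × r` matrix as a point of Euclidean space (whose inner product is
the Frobenius inner product). -/
def vecE {n r : ℕ} (X : Matrix (Fin n) (Fin r) ℝ) : EuclideanSpace ℝ (Fin n × Fin r) :=
  WithLp.toLp 2 (fun p : Fin n × Fin r => X p.1 p.2)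

/-- The objective as a function on Euclidean space. -/
def fE {n m : ℕ} (r : ℕ) (A : Fin m → Matrix (Fin n) (Fin n) ℝ)
    (Mstar : Matrix (Fin n) (Fin n) ℝ) (w : Fin m → ℝ) :
    EuclideanSpace ℝ (Fin n × Fin r) → ℝ :=
  fun x => fobj A Mstar w (toMat x)

/-- Hessian quadratic form `D²f(X)[U, U]` (second Fréchet derivative). -/
def hessQF {n m : ℕ} (r : ℕ) (A : Fin m → Matrix (Fin n) (Fin n) ℝ)
    (Mstar : Matrix (Fin n) (Fin n) ℝ) (w : Fin m → ℝ)
    (X U : Matrix (Fin n) (Fin r) ℝ) : ℝ :=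
  iteratedFDeriv ℝ 2 (fE r A Mstar w) (vecE X) ![vecE U, vecE U]

/-- Gradient `∇f(X)` with respect to the Frobenius inner product, as a matrix. -/
def gradf {n m : ℕ} (r : ℕ) (A : Fin m → Matrix (Fin n) (Fin n) ℝ)
    (Mstar : Matrix (Fin n) (Fin n) ℝ) (w : Fin m → ℝ)
    (X : Matrix (Fin n) (Fin r) ℝ) : Matrix (Fin n) (Fin r) ℝ :=
  toMat (gradient (fE r A Mstar w) (vecE X))


section AuxStatement9

lemma aux9_trace_psd_nonneg {k : ℕ} {A : Matrix (Fin k) (Fin k) ℝ} (hA : A.PosSemidef) :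
    0 ≤ A.trace := by
  rw [Matrix.trace]
  refine Finset.sum_nonneg fun i _ => ?_
  exact hA.diag_nonneg

lemma aux9_trace_mul_psd_nonneg {k : ℕ} {A B : Matrix (Fin k) (Fin k) ℝ}
    (hA : A.PosSemidef) (hB : B.PosSemidef) : 0 ≤ (A * B).trace := by
  open scoped MatrixOrder Matrix.Norms.L2Operator in
  obtain ⟨C, hC⟩ := CStarAlgebra.nonneg_iff_eq_star_mul_self.mp hB.nonneg
  rw [hC, ← mul_assoc, Matrix.trace_mul_cycle]
  exact aux9_trace_psd_nonneg (hA.mul_mul_conjTranspose_same C)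

lemma aux9_sub_smul_one_psd {k : ℕ} {S : Matrix (Fin k) (Fin k) ℝ}
    (hS : S.IsHermitian) (c : ℝ) (hc : ∀ i, c ≤ hS.eigenvalues i) :
    (S - c • 1).PosSemidef := by
  set U := (Matrix.IsHermitian.eigenvectorUnitary hS : Matrix (Fin k) (Fin k) ℝ)
  have hU : U * star U = 1 := (Matrix.mem_unitaryGroup_iff).mp
    (Matrix.IsHermitian.eigenvectorUnitary hS).2
  have hspec := hS.spectral_theorem
  have h1 : (c • 1 : Matrix (Fin k) (Fin k) ℝ) = U * (c • 1) * star U := by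
    rw [Matrix.mul_smul, Matrix.smul_mul, mul_one, hU]
  have hsub : S - c • 1
      = U * (Matrix.diagonal (RCLike.ofReal ∘ hS.eigenvalues) - c • 1) * star U := by
    rw [Unitary.conjStarAlgAut_apply] at hspec
    rw [Matrix.mul_sub, Matrix.sub_mul, ← hspec, ← h1]
  rw [hsub]
  refine Matrix.PosSemidef.mul_mul_conjTranspose_same ?_ U
  have hdiag : (Matrix.diagonal (RCLike.ofReal ∘ hS.eigenvalues) - c • 1 :
      Matrix (Fin k) (Fin k) ℝ) = Matrix.diagonal (fun i => hS.eigenvalues i - c) := by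
    ext i j
    by_cases h : i = j <;>
      simp [h, Matrix.diagonal_apply, Matrix.one_apply, Matrix.sub_apply, Matrix.smul_apply]
  rw [hdiag]
  exact Matrix.posSemidef_diagonal_iff.mpr fun i => sub_nonneg.mpr (hc i)

lemma aux9_sort_min {k : ℕ} (hk : 0 < k) (f : Fin k → ℝ) (j : Fin k) :
    f (Tuple.sort f ⟨0, hk⟩) ≤ f j := by
  have hm := Tuple.monotone_sort f
  have h1 : f j = (f ∘ Tuple.sort f) ((Tuple.sort f)⁻¹ j) := by simp
  rw [h1]
  exact hm (by simp [Fin.le_def])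

lemma aux9_fnorm_sq {a b : ℕ} (M : Matrix (Fin a) (Fin b) ℝ) :
    fnorm M ^ 2 = Matrix.trace (Mᵀ * M) := by
  rw [fnorm, Real.sq_sqrt (by positivity)]
  rw [Matrix.trace]
  simp only [Matrix.diag_apply, Matrix.mul_apply, Matrix.transpose_apply]
  rw [Finset.sum_comm]
  simp [pow_two]

end AuxStatement9

/-- inequality (25) in the proof of Lemma 3. -/
theorem statement9
    (n r : ℕ) (hrn : r ≤ n)
    (Xhat Z : Matrix (Fin n) (Fin r) ℝ)
    (P : Matrix (Fin n) (Fin n) ℝ)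
    (hPsymm : Pᵀ = P) (hPidem : P * P = P) (hPX : P * Xhat = Xhat)
    (hPrange : ∃ B : Matrix (Fin r) (Fin n) ℝ, P = Xhat * B)
    (R : Matrix (Fin r) (Fin r) ℝ) (hR : P * Z = Xhat * R)
    (Yhat : Matrix (Fin n) (Fin r) ℝ)
    (hY : Yhat = (1 / 2 : ℝ) • Xhat - (1 / 2 : ℝ) • (Xhat * R * Rᵀ) - (1 - P) * Z * Rᵀ) :
    2 * Matrix.trace (Xhatᵀ * Xhat * (Yhatᵀ * Yhat)) ≤
      fnorm (Xhat * Yhatᵀ + Yhat * Xhatᵀ) ^ 2 ∧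
    2 * sigmaMin Xhat ^ 2 * fnorm Yhat ^ 2 ≤
      2 * Matrix.trace (Xhatᵀ * Xhat * (Yhatᵀ * Yhat)) := by
  rcases Nat.eq_zero_or_pos r with hr0 | hr
  · subst hr0
    have hE : Xhat * Yhatᵀ + Yhat * Xhatᵀ = 0 := by
      ext i j; simp [Matrix.mul_apply]
    have htr : Matrix.trace (Xhatᵀ * Xhat * (Yhatᵀ * Yhat)) = 0 := by
      simp [Matrix.trace]
    have hfn : fnorm Yhat = 0 := by simp [fnorm]
    constructor
    · rw [hE, htr]; simp [fnorm]
    · rw [htr, hfn]; simp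
  -- main case
  have hXP : Xhatᵀ * (1 - P) = 0 := by
    have : Xhatᵀ * P = Xhatᵀ := by
      rw [← hPsymm, ← Matrix.transpose_mul, hPX]
    rw [Matrix.mul_sub, Matrix.mul_one, this, sub_self]
  set T : Matrix (Fin r) (Fin r) ℝ := 1 - R * Rᵀ with hTdef
  have hT : Tᵀ = T := by
    rw [hTdef, Matrix.transpose_sub, Matrix.transpose_one, Matrix.transpose_mul,
      Matrix.transpose_transpose]
  have hXY : Xhatᵀ * Yhat = Xhatᵀ * ((1 / 2 : ℝ) • (Xhat * T)) := by
    have h0 : Xhatᵀ * ((1 - P) * (Z * Rᵀ)) = 0 := by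
      rw [← Matrix.mul_assoc Xhatᵀ, hXP, Matrix.zero_mul]
    rw [hY, hTdef]
    simp only [Matrix.mul_sub, Matrix.mul_smul, Matrix.mul_one, smul_sub,
      Matrix.mul_assoc, h0, sub_zero]
  set b : Matrix (Fin n) (Fin r) ℝ := (1 / 2 : ℝ) • (Xhat * T) with hb
  have hN : (b * Xhatᵀ)ᵀ = b * Xhatᵀ := by
    rw [Matrix.transpose_mul, hb, Matrix.transpose_smul, Matrix.transpose_mul, hT,
      Matrix.transpose_transpose, Matrix.smul_mul, Matrix.mul_smul, Matrix.mul_assoc]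
  have hq : 0 ≤ Matrix.trace ((Xhatᵀ * Yhat) * (Xhatᵀ * Yhat)) := by
    rw [hXY]
    have key : Matrix.trace ((Xhatᵀ * b) * (Xhatᵀ * b))
        = Matrix.trace ((b * Xhatᵀ)ᵀ * (b * Xhatᵀ)) := by
      rw [hN, Matrix.mul_assoc, Matrix.trace_mul_comm]
      simp [Matrix.mul_assoc]
    rw [key]
    have hpsd : ((b * Xhatᵀ)ᵀ * (b * Xhatᵀ)).PosSemidef := by
      have := Matrix.posSemidef_conjTranspose_mul_self (b * Xhatᵀ)
      rwa [Matrix.conjTranspose_eq_transpose_of_trivial] at this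
    exact aux9_trace_psd_nonneg hpsd
  -- trace rearrangement lemmas
  have t1 : Matrix.trace (Yhat * Xhatᵀ * (Xhat * Yhatᵀ))
      = Matrix.trace (Xhatᵀ * Xhat * (Yhatᵀ * Yhat)) := by
    rw [Matrix.trace_mul_comm, ← Matrix.mul_assoc, Matrix.trace_mul_cycle]
    simp [Matrix.mul_assoc]
  have t4 : Matrix.trace (Xhat * Yhatᵀ * (Yhat * Xhatᵀ))
      = Matrix.trace (Xhatᵀ * Xhat * (Yhatᵀ * Yhat)) := by
    rw [← Matrix.mul_assoc, Matrix.trace_mul_cycle]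
    simp [Matrix.mul_assoc]
  have t2 : Matrix.trace (Yhat * Xhatᵀ * (Yhat * Xhatᵀ))
      = Matrix.trace ((Xhatᵀ * Yhat) * (Xhatᵀ * Yhat)) := by
    rw [Matrix.mul_assoc, Matrix.trace_mul_comm]
    simp [Matrix.mul_assoc]
  have t3 : Matrix.trace (Xhat * Yhatᵀ * (Xhat * Yhatᵀ))
      = Matrix.trace ((Xhatᵀ * Yhat) * (Xhatᵀ * Yhat)) := by
    have : Xhat * Yhatᵀ * (Xhat * Yhatᵀ) = ((Yhat * Xhatᵀ) * (Yhat * Xhatᵀ))ᵀ := by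
      simp [Matrix.transpose_mul, Matrix.mul_assoc]
    rw [this, Matrix.trace_transpose, t2]
  have hexp : fnorm (Xhat * Yhatᵀ + Yhat * Xhatᵀ) ^ 2
      = 2 * Matrix.trace (Xhatᵀ * Xhat * (Yhatᵀ * Yhat))
        + 2 * Matrix.trace ((Xhatᵀ * Yhat) * (Xhatᵀ * Yhat)) := by
    rw [aux9_fnorm_sq]
    simp only [Matrix.transpose_add, Matrix.transpose_mul, Matrix.transpose_transpose,
      Matrix.add_mul, Matrix.mul_add, Matrix.trace_add]
    rw [t1, t2, t3, t4]
    ring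
  refine ⟨by rw [hexp]; linarith, ?_⟩
  -- second inequality
  have hHerm : (Xhatᵀ * Xhat).IsHermitian := by
    have := Matrix.isHermitian_conjTranspose_mul_self Xhat
    rwa [Matrix.conjTranspose_eq_transpose_of_trivial] at this
  have hPSD : (Xhatᵀ * Xhat).PosSemidef := by
    have := Matrix.posSemidef_conjTranspose_mul_self Xhat
    rwa [Matrix.conjTranspose_eq_transpose_of_trivial] at this
  set c : ℝ := hHerm.eigenvalues (Tuple.sort hHerm.eigenvalues ⟨0, hr⟩) with hcdef
  have hsig : sigmaMin Xhat ^ 2 = c := by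
    rw [sigmaMin, dif_pos hr, eigval, dif_pos hHerm]
    have hidx : (⟨r - 1 - (r - 1), by omega⟩ : Fin r) = ⟨0, hr⟩ := by
      apply Fin.ext; simp
    rw [hidx, Real.sq_sqrt (hPSD.eigenvalues_nonneg _)]
  have hmin : ∀ i, c ≤ hHerm.eigenvalues i := fun i =>
    aux9_sort_min hr hHerm.eigenvalues i
  have hsub := aux9_sub_smul_one_psd hHerm c hmin
  have hYY : (Yhatᵀ * Yhat).PosSemidef := by
    have := Matrix.posSemidef_conjTranspose_mul_self Yhat
    rwa [Matrix.conjTranspose_eq_transpose_of_trivial] at this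
  have hkey := aux9_trace_mul_psd_nonneg hsub hYY
  have hexp2 : (Xhatᵀ * Xhat - c • 1) * (Yhatᵀ * Yhat)
      = Xhatᵀ * Xhat * (Yhatᵀ * Yhat) - c • (Yhatᵀ * Yhat) := by
    rw [Matrix.sub_mul, Matrix.smul_mul, one_mul]
  rw [hexp2, Matrix.trace_sub, Matrix.trace_smul, sub_nonneg] at hkey
  have hfn2 : fnorm Yhat ^ 2 = Matrix.trace (Yhatᵀ * Yhat) := aux9_fnorm_sq Yhat
  rw [hsig, hfn2]
  have : c • Matrix.trace (Yhatᵀ * Yhat) = c * Matrix.trace (Yhatᵀ * Yhat) := rfl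
  rw [this] at hkey
  linarith
end
end

section
/- (Core implication in the proof of Theorem 6.) Let f₀(X) = ½‖𝒜(XXᵀ) − b‖² be the noiseless objective. Let D ∈ (0,1] and λ₀ > 0 be constants such that for every X ∈ ℝ^{n×r} with ‖X‖₂ < D there exists U ∈ ℝ^{n×r} with ‖U‖_F = 1 and D²f₀(X)[U,U] < −λ₀. Let ε ∈ (0,λ₀), assume ‖𝐀ᵀw‖ ≤ ε/2, set κ̃ = min{λ₀ − ε, D·ε}, and suppose X̂ ∈ ℝ^{n×r} satisfies ‖∇f(X̂)‖_F ≤ κ̃ and D²f(X̂)[U,U] ≥ −κ̃‖U‖_F² for all U. Then ‖X̂‖₂ ≥ D, ‖∇f(X̂)‖_F ≤ ε·‖X̂‖₂, and D²f(X̂)[U,U] ≥ −ε‖U‖_F² for all U ∈ ℝ^{n×r}. -/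
open scoped BigOperators
open Matrix

noncomputable section

section Gen


variable {ι : Type*} [Fintype ι]

lemma myContDiff_coord (a : ι) : ContDiff ℝ 2 (fun x : EuclideanSpace ℝ ι => x a) :=
  (EuclideanSpace.proj (𝕜 := ℝ) a).contDiff

lemma myFderiv_coord_mul (a b : ι) :
    fderiv ℝ (fun x : EuclideanSpace ℝ ι => x a * x b) =
      ⇑((EuclideanSpace.proj (𝕜 := ℝ) a).smulRight
          (EuclideanSpace.proj (𝕜 := ℝ) (ι := ι) b) +
        (EuclideanSpace.proj (𝕜 := ℝ) b).smulRight
          (EuclideanSpace.proj (𝕜 := ℝ) (ι := ι) a)) := by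
  funext y
  have hda : DifferentiableAt ℝ (fun x : EuclideanSpace ℝ ι => x a) y :=
    (EuclideanSpace.proj (𝕜 := ℝ) a).differentiableAt
  have hdb : DifferentiableAt ℝ (fun x : EuclideanSpace ℝ ι => x b) y :=
    (EuclideanSpace.proj (𝕜 := ℝ) b).differentiableAt
  rw [fderiv_fun_mul hda hdb]
  have ha : fderiv ℝ (fun x : EuclideanSpace ℝ ι => x a) y = EuclideanSpace.proj (𝕜 := ℝ) a :=
    (EuclideanSpace.proj (𝕜 := ℝ) (ι := ι) a).fderiv
  have hb : fderiv ℝ (fun x : EuclideanSpace ℝ ι => x b) y = EuclideanSpace.proj (𝕜 := ℝ) b :=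
    (EuclideanSpace.proj (𝕜 := ℝ) (ι := ι) b).fderiv
  rw [ha, hb]
  ext u
  simp [ContinuousLinearMap.smulRight_apply]

lemma myHess_coord_mul (a b : ι) (z U : EuclideanSpace ℝ ι) :
    iteratedFDeriv ℝ 2 (fun x : EuclideanSpace ℝ ι => x a * x b) z ![U, U]
      = 2 * (U a * U b) := by
  rw [iteratedFDeriv_two_apply, myFderiv_coord_mul, ContinuousLinearMap.fderiv]
  simp [ContinuousLinearMap.smulRight_apply]
  ring

lemma myContDiff_monomial (a b : ι) :
    ContDiff ℝ 2 (fun x : EuclideanSpace ℝ ι => x a * x b) :=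
  (myContDiff_coord a).mul (myContDiff_coord b)

lemma myContDiff_quadform (C : ι → ι → ℝ) :
    ContDiff ℝ 2 (fun x : EuclideanSpace ℝ ι => ∑ a : ι, ∑ b : ι, C a b * (x a * x b)) :=
  ContDiff.sum fun a _ => ContDiff.sum fun b _ =>
    (contDiff_const.mul (myContDiff_monomial a b))

lemma myHess_quadform (C : ι → ι → ℝ) (z U : EuclideanSpace ℝ ι) :
    iteratedFDeriv ℝ 2 (fun x : EuclideanSpace ℝ ι => ∑ a : ι, ∑ b : ι, C a b * (x a * x b))
        z ![U, U]
      = ∑ a : ι, ∑ b : ι, C a b * (2 * (U a * U b)) := by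
  have hfun : (fun x : EuclideanSpace ℝ ι => ∑ a : ι, ∑ b : ι, C a b * (x a * x b))
      = (fun x : EuclideanSpace ℝ ι =>
          ∑ p ∈ (Finset.univ : Finset (ι × ι)),
            (C p.1 p.2 • fun y : EuclideanSpace ℝ ι => y p.1 * y p.2) x) := by
    funext x
    simp [Fintype.sum_prod_type, smul_eq_mul]
  rw [hfun, iteratedFDeriv_sum (fun p _ =>
    (myContDiff_monomial p.1 p.2).const_smul (C p.1 p.2))]
  simp only [Finset.sum_apply, ContinuousMultilinearMap.sum_apply]
  have : ∀ p : ι × ι,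
      iteratedFDeriv ℝ 2 (C p.1 p.2 • fun y : EuclideanSpace ℝ ι => y p.1 * y p.2) z ![U, U]
        = C p.1 p.2 * (2 * (U p.1 * U p.2)) := by
    intro p
    rw [iteratedFDeriv_const_smul_apply (myContDiff_monomial p.1 p.2).contDiffAt]
    simp [myHess_coord_mul]
  rw [Finset.sum_congr rfl fun p _ => this p]
  rw [Fintype.sum_prod_type]

lemma myHess_add_quad (f : EuclideanSpace ℝ ι → ℝ) (hf : ContDiff ℝ 2 f)
    (C : ι → ι → ℝ) (c0 : ℝ) (z U : EuclideanSpace ℝ ι) :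
    iteratedFDeriv ℝ 2
        (fun x => f x + ((∑ a : ι, ∑ b : ι, C a b * (x a * x b)) + c0)) z ![U, U]
      = iteratedFDeriv ℝ 2 f z ![U, U] + ∑ a : ι, ∑ b : ι, C a b * (2 * (U a * U b)) := by
  have hq := myContDiff_quadform C
  have hq' : ContDiff ℝ 2 (fun x : EuclideanSpace ℝ ι =>
      (∑ a : ι, ∑ b : ι, C a b * (x a * x b)) + c0) := hq.add contDiff_const
  rw [iteratedFDeriv_add_apply' hf.contDiffAt hq'.contDiffAt, ContinuousMultilinearMap.add_apply,
    iteratedFDeriv_add_apply' hq.contDiffAt (contDiff_const (c := c0)).contDiffAt,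
    ContinuousMultilinearMap.add_apply,
    iteratedFDeriv_const_of_ne (by norm_num : (2:ℕ) ≠ 0)]
  simp [myHess_quadform]

end Gen

lemma enorm_sq {k : ℕ} (v : Fin k → ℝ) : enorm' v ^ 2 = ∑ i, (v i) ^ 2 :=
  Real.sq_sqrt (Finset.sum_nonneg fun _ _ => sq_nonneg _)

lemma fnorm_nonneg {a b : ℕ} (M : Matrix (Fin a) (Fin b) ℝ) : 0 ≤ fnorm M :=
  Real.sqrt_nonneg _

lemma fnorm_sq {a b : ℕ} (M : Matrix (Fin a) (Fin b) ℝ) :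
    fnorm M ^ 2 = ∑ i, ∑ j, (M i j) ^ 2 :=
  Real.sq_sqrt (Finset.sum_nonneg fun _ _ => Finset.sum_nonneg fun _ _ => sq_nonneg _)

/-- Cauchy–Schwarz for the Frobenius inner product. -/
lemma abs_finner_le {a b : ℕ} (M N : Matrix (Fin a) (Fin b) ℝ) :
    |finner M N| ≤ fnorm M * fnorm N := by
  have h := Finset.sum_mul_sq_le_sq_mul_sq (Finset.univ : Finset (Fin a × Fin b))
    (fun p => M p.1 p.2) (fun p => N p.1 p.2)
  have h1 : finner M N = ∑ p : Fin a × Fin b, M p.1 p.2 * N p.1 p.2 := by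
    rw [Fintype.sum_prod_type]; rfl
  have h2 : fnorm M = Real.sqrt (∑ p : Fin a × Fin b, (M p.1 p.2) ^ 2) := by
    rw [fnorm, Fintype.sum_prod_type]
  have h3 : fnorm N = Real.sqrt (∑ p : Fin a × Fin b, (N p.1 p.2) ^ 2) := by
    rw [fnorm, Fintype.sum_prod_type]
  calc |finner M N| = Real.sqrt ((finner M N) ^ 2) := (Real.sqrt_sq_eq_abs _).symm
    _ ≤ Real.sqrt ((∑ p : Fin a × Fin b, (M p.1 p.2) ^ 2) *
        ∑ p : Fin a × Fin b, (N p.1 p.2) ^ 2) := by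
        apply Real.sqrt_le_sqrt; rw [h1]; exact h
    _ = fnorm M * fnorm N := by
        rw [h2, h3, ← Real.sqrt_mul (Finset.sum_nonneg fun _ _ => sq_nonneg _)]

lemma fnorm_mul_transpose_le {n r : ℕ} (U : Matrix (Fin n) (Fin r) ℝ) :
    fnorm (U * Uᵀ) ≤ fnorm U ^ 2 := by
  have key : ∑ p, ∑ q, ((U * Uᵀ) p q) ^ 2 ≤ (∑ i, ∑ j, (U i j) ^ 2) ^ 2 := by
    have h1 : ∀ p q : Fin n, ((U * Uᵀ) p q) ^ 2 ≤
        (∑ k, (U p k) ^ 2) * ∑ k, (U q k) ^ 2 := by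
      intro p q
      have := Finset.sum_mul_sq_le_sq_mul_sq (Finset.univ : Finset (Fin r))
        (fun k => U p k) (fun k => U q k)
      simpa [Matrix.mul_apply, Matrix.transpose_apply] using this
    calc ∑ p, ∑ q, ((U * Uᵀ) p q) ^ 2
        ≤ ∑ p, ∑ q, (∑ k, (U p k) ^ 2) * ∑ k, (U q k) ^ 2 :=
          Finset.sum_le_sum fun p _ => Finset.sum_le_sum fun q _ => h1 p q
      _ = (∑ i, ∑ j, (U i j) ^ 2) ^ 2 := by
          rw [sq, Finset.sum_mul]
          exact Finset.sum_congr rfl fun p _ => by rw [← Finset.mul_sum]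
  calc fnorm (U * Uᵀ) = Real.sqrt (∑ p, ∑ q, ((U * Uᵀ) p q) ^ 2) := rfl
    _ ≤ Real.sqrt ((∑ i, ∑ j, (U i j) ^ 2) ^ 2) := Real.sqrt_le_sqrt key
    _ = ∑ i, ∑ j, (U i j) ^ 2 := Real.sqrt_sq (Finset.sum_nonneg fun _ _ =>
        Finset.sum_nonneg fun _ _ => sq_nonneg _)
    _ = fnorm U ^ 2 := (fnorm_sq U).symm

/-- `enorm (𝐀ᵀ w) = fnorm G` where `G p q = ∑ i, w i * A i p q`. -/
lemma enorm_bigA_transpose {n m : ℕ} (A : Fin m → Matrix (Fin n) (Fin n) ℝ) (w : Fin m → ℝ) :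
    enorm' (Matrix.mulVec (bigA A)ᵀ w) =
      fnorm (Matrix.of fun p q => ∑ i, w i * A i p q) := by
  have h : ∀ l : Fin (n * n), Matrix.mulVec (bigA A)ᵀ w l =
      ∑ i, w i * A i (finProdFinEquiv.symm l).1 (finProdFinEquiv.symm l).2 := by
    intro l
    simp [Matrix.mulVec, dotProduct, bigA, vecSq, mul_comm]
  rw [enorm', fnorm]
  congr 1
  calc ∑ l, (Matrix.mulVec (bigA A)ᵀ w l) ^ 2
      = ∑ pq : Fin n × Fin n, (∑ i, w i * A i pq.1 pq.2) ^ 2 :=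
        Fintype.sum_equiv finProdFinEquiv.symm _ _ (fun l => by rw [h l])
    _ = ∑ p, ∑ q, (Matrix.of fun p q => ∑ i, w i * A i p q) p q ^ 2 := by
        rw [Fintype.sum_prod_type]; rfl

lemma weighted_calA {n m : ℕ} (A : Fin m → Matrix (Fin n) (Fin n) ℝ) (w : Fin m → ℝ)
    (N : Matrix (Fin n) (Fin n) ℝ) :
    ∑ i, w i * calA A N i = ∑ p, ∑ q, (∑ i, w i * A i p q) * N p q := by
  calc ∑ i, w i * calA A N i
      = ∑ i, ∑ p, ∑ q, w i * (A i p q * N p q) := by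
        simp only [calA, finner, Finset.mul_sum]
    _ = ∑ p, ∑ i, ∑ q, w i * (A i p q * N p q) := Finset.sum_comm
    _ = ∑ p, ∑ q, ∑ i, w i * (A i p q * N p q) :=
        Finset.sum_congr rfl fun p _ => Finset.sum_comm
    _ = ∑ p, ∑ q, (∑ i, w i * A i p q) * N p q :=
        Finset.sum_congr rfl fun p _ => Finset.sum_congr rfl fun q _ => by
          rw [Finset.sum_mul]; exact Finset.sum_congr rfl fun i _ => by ring

lemma mulT_apply {n r : ℕ} (x : EuclideanSpace ℝ (Fin n × Fin r)) (p q : Fin n) :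
    (toMat x * (toMat x)ᵀ) p q = ∑ k, x (p, k) * x (q, k) := by
  simp [Matrix.mul_apply, toMat]

lemma quad_sum_eq {n m r : ℕ} (A : Fin m → Matrix (Fin n) (Fin n) ℝ) (w : Fin m → ℝ)
    (x : EuclideanSpace ℝ (Fin n × Fin r)) :
    ∑ a : Fin n × Fin r, ∑ b : Fin n × Fin r,
        (if a.2 = b.2 then ∑ i, w i * A i a.1 b.1 else 0) * (x a * x b)
      = ∑ p, ∑ q, (∑ i, w i * A i p q) * ((toMat x * (toMat x)ᵀ) p q) := by
  calc ∑ a : Fin n × Fin r, ∑ b : Fin n × Fin r,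
        (if a.2 = b.2 then ∑ i, w i * A i a.1 b.1 else 0) * (x a * x b)
      = ∑ p, ∑ k, ∑ q, ∑ l, (if k = l then ∑ i, w i * A i p q else 0) *
          (x (p, k) * x (q, l)) := by
        simp only [Fintype.sum_prod_type]
    _ = ∑ p, ∑ k, ∑ q, (∑ i, w i * A i p q) * (x (p, k) * x (q, k)) := by
        simp [ite_mul, Finset.sum_ite_eq]
    _ = ∑ p, ∑ q, ∑ k, (∑ i, w i * A i p q) * (x (p, k) * x (q, k)) :=
        Finset.sum_congr rfl fun p _ => Finset.sum_comm
    _ = ∑ p, ∑ q, (∑ i, w i * A i p q) * ((toMat x * (toMat x)ᵀ) p q) := by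
        refine Finset.sum_congr rfl fun p _ => Finset.sum_congr rfl fun q _ => ?_
        rw [mulT_apply, Finset.mul_sum]

lemma fE_decomp {n m r : ℕ} (A : Fin m → Matrix (Fin n) (Fin n) ℝ)
    (Mstar : Matrix (Fin n) (Fin n) ℝ) (w : Fin m → ℝ) :
    fE r A Mstar w = fun x : EuclideanSpace ℝ (Fin n × Fin r) =>
      fE r A Mstar (fun _ => 0) x +
      ((∑ a : Fin n × Fin r, ∑ b : Fin n × Fin r,
          (if a.2 = b.2 then ∑ i, w i * A i a.1 b.1 else 0) * (x a * x b)) +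
        ∑ i, (-(w i * calA A Mstar i) + (1 / 2) * w i ^ 2)) := by
  funext x
  simp only [fE, fobj]
  rw [enorm_sq, enorm_sq, quad_sum_eq, ← weighted_calA]
  rw [Finset.mul_sum, Finset.mul_sum, ← Finset.sum_add_distrib, ← Finset.sum_add_distrib]
  exact Finset.sum_congr rfl fun i _ => by ring

lemma calA_sq_fun {n m r : ℕ} (A : Fin m → Matrix (Fin n) (Fin n) ℝ) (i : Fin m)
    (x : EuclideanSpace ℝ (Fin n × Fin r)) :
    calA A (toMat x * (toMat x)ᵀ) i = ∑ p, ∑ q, A i p q * ∑ k, x (p, k) * x (q, k) := by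
  simp only [calA, finner, mulT_apply]

lemma contDiff_fE0 {n m r : ℕ} (A : Fin m → Matrix (Fin n) (Fin n) ℝ)
    (Mstar : Matrix (Fin n) (Fin n) ℝ) :
    ContDiff ℝ 2 (fE r A Mstar (fun _ => 0)) := by
  have heq : fE r A Mstar (fun _ => 0) = fun x : EuclideanSpace ℝ (Fin n × Fin r) =>
      (1 / 2) * ∑ i, ((∑ p, ∑ q, A i p q * ∑ k, x (p, k) * x (q, k))
        - calA A Mstar i + 0) ^ 2 := by
    funext x
    simp only [fE, fobj]
    rw [enorm_sq]
    exact congrArg _ (Finset.sum_congr rfl fun i _ => by rw [calA_sq_fun])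
  rw [heq]
  refine contDiff_const.mul (ContDiff.sum fun i _ => ContDiff.pow ?_ 2)
  refine ContDiff.add (ContDiff.sub ?_ contDiff_const) contDiff_const
  exact ContDiff.sum fun p _ => ContDiff.sum fun q _ =>
    contDiff_const.mul (ContDiff.sum fun k _ => myContDiff_monomial (p, k) (q, k))

lemma hessQF_decomp {n m r : ℕ} (A : Fin m → Matrix (Fin n) (Fin n) ℝ)
    (Mstar : Matrix (Fin n) (Fin n) ℝ) (w : Fin m → ℝ)
    (X U : Matrix (Fin n) (Fin r) ℝ) :
    hessQF r A Mstar w X U = hessQF r A Mstar (fun _ => 0) X U +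
      ∑ a : Fin n × Fin r, ∑ b : Fin n × Fin r,
        (if a.2 = b.2 then ∑ i, w i * A i a.1 b.1 else 0) *
          (2 * (vecE U a * vecE U b)) := by
  unfold hessQF
  rw [fE_decomp A Mstar w]
  exact myHess_add_quad _ (contDiff_fE0 A Mstar) _ _ (vecE X) (vecE U)

lemma quadterm_eq {n m r : ℕ} (A : Fin m → Matrix (Fin n) (Fin n) ℝ) (w : Fin m → ℝ)
    (U : Matrix (Fin n) (Fin r) ℝ) :
    ∑ a : Fin n × Fin r, ∑ b : Fin n × Fin r,
        (if a.2 = b.2 then ∑ i, w i * A i a.1 b.1 else 0) * (2 * (vecE U a * vecE U b))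
      = 2 * finner (Matrix.of fun p q => ∑ i, w i * A i p q) (U * Uᵀ) := by
  have h1 : ∑ a : Fin n × Fin r, ∑ b : Fin n × Fin r,
      (if a.2 = b.2 then ∑ i, w i * A i a.1 b.1 else 0) * (2 * (vecE U a * vecE U b))
      = 2 * ∑ a : Fin n × Fin r, ∑ b : Fin n × Fin r,
      (if a.2 = b.2 then ∑ i, w i * A i a.1 b.1 else 0) * (vecE U a * vecE U b) := by
    rw [Finset.mul_sum]
    refine Finset.sum_congr rfl fun a _ => ?_
    rw [Finset.mul_sum]
    exact Finset.sum_congr rfl fun b _ => by ring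
  rw [h1, quad_sum_eq A w (vecE U)]
  have h2 : toMat (vecE U) = U := rfl
  rw [h2]
  rfl

/-- core implication in the proof of Theorem 6. -/
theorem statement16
    (n m r rs : ℕ) (hrs : 1 ≤ rs) (hrrs : rs ≤ r)
    (A : Fin m → Matrix (Fin n) (Fin n) ℝ)
    (Mstar : Matrix (Fin n) (Fin n) ℝ) (hM : Mstar.PosSemidef) (hrank : Mstar.rank = rs)
    (w : Fin m → ℝ)
    (D lam0 : ℝ) (hD0 : 0 < D) (hD1 : D ≤ 1) (hlam : 0 < lam0)
    (hsaddle : ∀ X : Matrix (Fin n) (Fin r) ℝ, specNorm X < D →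
      ∃ U : Matrix (Fin n) (Fin r) ℝ, fnorm U = 1 ∧
        hessQF r A Mstar (fun _ => 0) X U < -lam0)
    (ε : ℝ) (hε0 : 0 < ε) (hε1 : ε < lam0)
    (hw : enorm' (Matrix.mulVec (bigA A)ᵀ w) ≤ ε / 2)
    (Xhat : Matrix (Fin n) (Fin r) ℝ)
    (hgrad : fnorm (gradf r A Mstar w Xhat) ≤ min (lam0 - ε) (D * ε))
    (hhess : ∀ U : Matrix (Fin n) (Fin r) ℝ,
      -(min (lam0 - ε) (D * ε) * fnorm U ^ 2) ≤ hessQF r A Mstar w Xhat U) :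
    D ≤ specNorm Xhat ∧
    fnorm (gradf r A Mstar w Xhat) ≤ ε * specNorm Xhat ∧
    (∀ U : Matrix (Fin n) (Fin r) ℝ,
      -(ε * fnorm U ^ 2) ≤ hessQF r A Mstar w Xhat U) := by
  set G : Matrix (Fin n) (Fin n) ℝ := Matrix.of fun p q => ∑ i, w i * A i p q with hG
  have hGnorm : fnorm G ≤ ε / 2 := by
    rw [← enorm_bigA_transpose]; exact hw
  have hmin1 : min (lam0 - ε) (D * ε) ≤ lam0 - ε := min_le_left _ _
  have hmin2 : min (lam0 - ε) (D * ε) ≤ D * ε := min_le_right _ _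
  have part1 : D ≤ specNorm Xhat := by
    by_contra hcon
    push_neg at hcon
    obtain ⟨U, hU1, hUh⟩ := hsaddle Xhat hcon
    have hdec := hessQF_decomp A Mstar w Xhat U
    rw [quadterm_eq A w U] at hdec
    have hcs : |finner G (U * Uᵀ)| ≤ fnorm G * fnorm (U * Uᵀ) := abs_finner_le G (U * Uᵀ)
    have hUUT : fnorm (U * Uᵀ) ≤ 1 := by
      have := fnorm_mul_transpose_le U
      rw [hU1] at this; simpa using this
    have hbound : |finner G (U * Uᵀ)| ≤ ε / 2 := by
      calc |finner G (U * Uᵀ)| ≤ fnorm G * fnorm (U * Uᵀ) := hcs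
        _ ≤ (ε / 2) * 1 := by
            apply mul_le_mul hGnorm hUUT (fnorm_nonneg _) (by linarith)
        _ = ε / 2 := by ring
    have h2 := hhess U
    rw [hU1] at h2
    have habs := abs_le.1 hbound
    nlinarith [h2, hUh, hdec]
  refine ⟨part1, ?_, ?_⟩
  · calc fnorm (gradf r A Mstar w Xhat) ≤ D * ε := le_trans hgrad hmin2
      _ ≤ ε * specNorm Xhat := by nlinarith
  · intro U
    have h2 := hhess U
    have hmε : min (lam0 - ε) (D * ε) ≤ ε := le_trans hmin2 (by nlinarith)
    nlinarith [sq_nonneg (fnorm U)]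
end
end
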